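/- The determinant of the 4×4 matrix g|_{Σ_τ} (the induced spatial metric of the 5D Myers-Perry metric on constant-τ slices) equals r²Σ(Σ+μ)sin²θcos²θ. -/

import Mathlib

set_option maxHeartbeats 2000000


lemma det4 (x00 x01 x02 x03 x10 x11 x12 x13 x20 x21 x22 x23 x30 x31 x32 x33 : ℝ) :
    (!![x00,x01,x02,x03; x10,x11,x12,x13; x20,x21,x22,x23; x30,x31,x32,x33]).det =
      x00*(x11*(x22*x33 - x23*x32) - x12*(x21*x33 - x23*x31) + x13*(x21*x32 - x22*x31))
    - x01*(x10*(x22*x33 - x23*x32) - x12*(x20*x33 - x23*x30) + x13*(x20*x32 - x22*x30))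
    + x02*(x10*(x21*x33 - x23*x31) - x11*(x20*x33 - x23*x30) + x13*(x20*x31 - x21*x30))
    - x03*(x10*(x21*x32 - x22*x31) - x11*(x20*x32 - x22*x30) + x12*(x20*x31 - x21*x30)) := by
  simp [Matrix.det_succ_row_zero, Fin.sum_univ_succ, Fin.succAbove,
    Fin.castSucc, Fin.castAdd, Fin.castLE]
  ring

/-- The determinant of the induced spatial metric of the 5D Myers-Perry metric on
constant-τ slices equals r²Σ(Σ+μ)sin²θcos²θ. -/
theorem stmt5 (a b r μ θ : ℝ) (hr : 0 < r) (hμ : 0 < μ)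
    (hθ1 : 0 < θ) (hθ2 : θ < Real.pi/2)
    (S : ℝ) (hS : S = r^2 + a^2*(Real.cos θ)^2 + b^2*(Real.sin θ)^2)
    (g : Matrix (Fin 4) (Fin 4) ℝ)
    (hg : g = !![1 + μ/S, 0, -a*(Real.sin θ)^2*(1 + μ/S), -b*(Real.cos θ)^2*(1 + μ/S);
                 0, S, 0, 0;
                 -a*(Real.sin θ)^2*(1 + μ/S), 0,
                   (r^2+a^2)*(Real.sin θ)^2 + a^2*(Real.sin θ)^4*(μ/S),
                   a*b*(Real.sin θ)^2*(Real.cos θ)^2*(μ/S);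
                 -b*(Real.cos θ)^2*(1 + μ/S), 0,
                   a*b*(Real.sin θ)^2*(Real.cos θ)^2*(μ/S),
                   (r^2+b^2)*(Real.cos θ)^2 + b^2*(Real.cos θ)^4*(μ/S)]) :
    g.det = r^2*S*(S + μ)*(Real.sin θ)^2*(Real.cos θ)^2 := by
  have hS0 : S ≠ 0 := by nlinarith [sq_nonneg (Real.cos θ), sq_nonneg (Real.sin θ), sq_nonneg (a*Real.cos θ), sq_nonneg (b*Real.sin θ)]
  have hpyth : (Real.sin θ)^2 = 1 - (Real.cos θ)^2 := by
    have := Real.sin_sq_add_cos_sq θ; linarith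
  subst hg
  rw [det4]
  set K := μ / S with hK
  have hmu : μ = K * S := by rw [hK]; field_simp
  have hpyth4 : (Real.sin θ)^4 = (1 - (Real.cos θ)^2)^2 := by
    rw [show (Real.sin θ)^4 = ((Real.sin θ)^2)^2 by ring, hpyth]
  rw [hmu, hS, hpyth4, hpyth]
  ring
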